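/- In the tabular softmax trajectory model, fix ε > 0, nonnegative sampling weights w : 𝒜^T → ℝ, per-token advantages A : 𝒜^T × {1, …, T} → ℝ, and old-policy probabilities q : 𝒮 × 𝒜 → ℝ with q(s,a) > 0 for all (s,a). For logits z : 𝒮 × 𝒜 → ℝ define the importance ratios ρ_t(z, y) = π_z(a_t | s_t(y)) / q(s_t(y), a_t) and the clipped surrogate loss ℒ(z) = Σ_{y ∈ 𝒜^T} w(y) Σ_{t=1}^T min(ρ_t(z,y)·A(y,t), clip_ε(ρ_t(z,y))·A(y,t)). Suppose z₀ is such that ρ_t(z₀, y) ≠ 1−ε and ρ_t(z₀, y) ≠ 1+ε for every y with w(y) ≠ 0 and every 1 ≤ t ≤ T. Then ℒ is differentiable at z₀, and for each (s,a) ∈ 𝒮 × 𝒜 its partial derivative with respect to the coordinate z(s,a) equals Σ_{y ∈ 𝒜^T} w(y) Σ_{t=1}^T m(y,t)·A(y,t)·ρ_t(z₀,y)·1{s_t(y) = s}·(1{a_t = a} − π_{z₀}(a | s)), where m(y,t) = 0 if (A(y,t) ≥ 0 and ρ_t(z₀,y) > 1+ε) or (A(y,t) ≤ 0 and ρ_t(z₀,y)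 < 1−ε), and m(y,t) = 1 otherwise. -/

import Mathlib

open Finset Filter Asymptotics

noncomputable section

/-- Softmax policy: probability of action `a` in state `s` under logits `z`. -/
def pol {S A : Type*} [Fintype A] (z : S × A → ℝ) (s : S) (a : A) : ℝ :=
  Real.exp (z (s, a)) / ∑ b : A, Real.exp (z (s, b))

/-- State reached after `n` steps of the deterministic dynamics `δ` from `s0`,
taking actions `y 0, y 1, …`. -/
def stateAt {S A : Type*} (δ : S → A → S) (s0 : S) (y : ℕ → A) : ℕ → S
  | 0 => s0
  | n + 1 => δ (stateAt δ s0 y n) (y n)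

/-- State `s_t(y)` from which the `t`-th action of the trajectory `y` is taken. -/
def st {S A : Type*} (δ : S → A → S) (s0 : S) {T : ℕ} (y : Fin T → A) (t : Fin T) : S :=
  stateAt δ s0 (fun n => if h : n < T then y ⟨n, h⟩ else y t) t.val

/-- Trajectory probability `P_z(y) = ∏_t π_z(a_t | s_t(y))`. -/
def traj {S A : Type*} [Fintype A] (δ : S → A → S) (s0 : S) {T : ℕ}
    (z : S × A → ℝ) (y : Fin T → A) : ℝ :=
  ∏ t : Fin T, pol z (st δ s0 y t) (y t)

/-- Per-token negative log-likelihood `ℓ_z(y)`. -/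
def nll {S A : Type*} [Fintype A] (δ : S → A → S) (s0 : S) {T : ℕ}
    (z : S × A → ℝ) (y : Fin T → A) : ℝ :=
  -(1 / (T : ℝ)) * ∑ t : Fin T, Real.log (pol z (st δ s0 y t) (y t))

/-- Centered direction `ṽ_z(s,a) = v(s,a) − ∑_b π_z(b|s) v(s,b)`. -/
def centered {S A : Type*} [Fintype A] (z v : S × A → ℝ) (s : S) (a : A) : ℝ :=
  v (s, a) - ∑ b : A, pol z s b * v (s, b)

/-- Trajectory score `Ψ_{z,v}(y) = ∑_t ṽ_z(s_t(y), a_t)`. -/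
def score {S A : Type*} [Fintype A] (δ : S → A → S) (s0 : S) {T : ℕ}
    (z v : S × A → ℝ) (y : Fin T → A) : ℝ :=
  ∑ t : Fin T, centered z v (st δ s0 y t) (y t)

/-- Conditional expectation `E_{P_z}[f | E]`. -/
def condExp {S A : Type*} [Fintype A] (δ : S → A → S) (s0 : S) {T : ℕ}
    (z : S × A → ℝ) (E : Finset (Fin T → A)) (f : (Fin T → A) → ℝ) : ℝ :=
  (∑ y ∈ E, traj δ s0 z y * f y) / ∑ y ∈ E, traj δ s0 z y

/-- Conditional covariance `Cov_{P_z(·|E)}(f, g)`. -/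
def condCov {S A : Type*} [Fintype A] (δ : S → A → S) (s0 : S) {T : ℕ}
    (z : S × A → ℝ) (E : Finset (Fin T → A)) (f g : (Fin T → A) → ℝ) : ℝ :=
  condExp δ s0 z E (fun y => f y * g y) - condExp δ s0 z E f * condExp δ s0 z E g

/-- PPO clipping function `clip_ε(x) = min(max(x, 1−ε), 1+ε)`. -/
def clip (ε x : ℝ) : ℝ := min (max x (1 - ε)) (1 + ε)

/-- Importance ratio `ρ_t(z, y) = π_z(a_t | s_t(y)) / q(s_t(y), a_t)`. -/
def ratio {S A : Type*} [Fintype A] (δ : S → A → S) (s0 : S) {T : ℕ}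
    (q : S × A → ℝ) (z : S × A → ℝ) (y : Fin T → A) (t : Fin T) : ℝ :=
  pol z (st δ s0 y t) (y t) / q (st δ s0 y t, y t)

/-- Clipped surrogate loss
`ℒ(z) = ∑_y w(y) ∑_t min(ρ_t(z,y)·A(y,t), clip_ε(ρ_t(z,y))·A(y,t))`. -/
def surrogate {S A : Type*} [Fintype A] (δ : S → A → S) (s0 : S) {T : ℕ}
    (ε : ℝ) (w : (Fin T → A) → ℝ) (Adv : (Fin T → A) → Fin T → ℝ)
    (q : S × A → ℝ) (z : S × A → ℝ) : ℝ :=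
  ∑ y : Fin T → A, w y * ∑ t : Fin T,
    min (ratio δ s0 q z y t * Adv y t) (clip ε (ratio δ s0 q z y t) * Adv y t)

/-- Clipping mask `m(y,t)`: `0` when the clip is active, `1` otherwise. -/
def mask {S A : Type*} [Fintype A] (δ : S → A → S) (s0 : S) {T : ℕ}
    (ε : ℝ) (Adv : (Fin T → A) → Fin T → ℝ) (q : S × A → ℝ) (z : S × A → ℝ)
    (y : Fin T → A) (t : Fin T) : ℝ :=
  if (0 ≤ Adv y t ∧ 1 + ε < ratio δ s0 q z y t)
      ∨ (Adv y t ≤ 0 ∧ ratio δ s0 q z y t < 1 - ε)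
  then 0 else 1


section Aux

variable {S A : Type*} [Fintype S] [Fintype A] [Nonempty A] [DecidableEq S] [DecidableEq A]

lemma sumexp_pos (z : S × A → ℝ) (s : S) :
    0 < ∑ b : A, Real.exp (z (s, b)) :=
  Finset.sum_pos (fun _ _ => Real.exp_pos _) Finset.univ_nonempty

lemma diff_pol (s : S) (b : A) (z₀ : S × A → ℝ) :
    DifferentiableAt ℝ (fun z : S × A → ℝ => pol z s b) z₀ := by
  have h1 : DifferentiableAt ℝ (fun z : S × A → ℝ => Real.exp (z (s, b))) z₀ :=
    Real.differentiableAt_exp.comp z₀ ((differentiable_apply (𝕜 := ℝ) (s, b)) z₀)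
  have h2 : DifferentiableAt ℝ (fun z : S × A → ℝ => ∑ c : A, Real.exp (z (s, c))) z₀ :=
    DifferentiableAt.fun_sum fun c _ =>
      Real.differentiableAt_exp.comp z₀ ((differentiable_apply (𝕜 := ℝ) (s, c)) z₀)
  show DifferentiableAt ℝ
      (fun z : S × A → ℝ => Real.exp (z (s, b)) / ∑ c : A, Real.exp (z (s, c))) z₀
  simp only [div_eq_mul_inv]
  exact h1.mul (h2.inv (sumexp_pos z₀ s).ne')

lemma hasDerivAt_pol_update (s : S) (a : A) (s' : S) (b : A) (z₀ : S × A → ℝ) :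
    HasDerivAt (fun u : ℝ => pol (Function.update z₀ (s, a) u) s' b)
      (pol z₀ s' b * (if s' = s then ((if b = a then (1:ℝ) else 0) - pol z₀ s a) else 0))
      (z₀ (s, a)) := by
  by_cases hs : s' = s
  · subst hs
    set K : ℝ := ∑ c ∈ Finset.univ.erase a, Real.exp (z₀ (s', c)) with hK
    have hKnonneg : 0 ≤ K := Finset.sum_nonneg fun _ _ => (Real.exp_pos _).le
    have hD : ∀ u : ℝ, Real.exp u + K ≠ 0 := fun u => by positivity
    have key : ∀ u : ℝ, pol (Function.update z₀ (s', a) u) s' b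
        = Real.exp (if b = a then u else z₀ (s', b)) / (Real.exp u + K) := by
      intro u
      unfold pol
      have hden : ∑ c : A, Real.exp (Function.update z₀ (s', a) u (s', c))
          = Real.exp u + K := by
        rw [← Finset.add_sum_erase _ _ (Finset.mem_univ a)]
        congr 1
        · rw [Function.update_apply, if_pos rfl]
        · apply Finset.sum_congr rfl
          intro c hc
          rw [Function.update_apply, if_neg]
          intro h
          exact (Finset.mem_erase.mp hc).1 (congrArg Prod.snd h)
      rw [hden]
      congr 2
      rw [Function.update_apply]
      by_cases hba : b = a <;> simp [hba, Prod.ext_iff]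
    have hsum : ∑ c : A, Real.exp (z₀ (s', c)) = Real.exp (z₀ (s', a)) + K := by
      rw [← Finset.add_sum_erase _ _ (Finset.mem_univ a)]
    have hfun : (fun u : ℝ => pol (Function.update z₀ (s', a) u) s' b)
        = fun u : ℝ => Real.exp (if b = a then u else z₀ (s', b)) / (Real.exp u + K) :=
      funext key
    rw [hfun]
    by_cases hba : b = a
    · subst hba
      simp only [if_pos rfl]
      have h := (Real.hasDerivAt_exp (z₀ (s', b))).fun_div
        ((Real.hasDerivAt_exp (z₀ (s', b))).add_const K) (hD _)
      refine h.congr_deriv ?_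
      unfold pol
      rw [hsum]
      simp only [if_true]
      have hD0 := hD (z₀ (s', b))
      field_simp
    · simp only [if_neg hba]
      have h := (hasDerivAt_const (z₀ (s', a)) (Real.exp (z₀ (s', b)))).fun_div
        ((Real.hasDerivAt_exp (z₀ (s', a))).add_const K) (hD _)
      refine h.congr_deriv ?_
      unfold pol
      rw [hsum]
      simp only [if_true, if_neg hba]
      have hD0 := hD (z₀ (s', a))
      field_simp
      ring
  · have hfun : (fun u : ℝ => pol (Function.update z₀ (s, a) u) s' b)
        = fun _ : ℝ => pol z₀ s' b := by
      funext u
      unfold pol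
      congr 1
      · congr 1
        rw [Function.update_apply, if_neg]
        intro h; exact hs (congrArg Prod.fst h)
      · apply Finset.sum_congr rfl
        intro c _
        rw [Function.update_apply, if_neg]
        intro h; exact hs (congrArg Prod.fst h)
    rw [hfun, if_neg hs, mul_zero]
    exact hasDerivAt_const _ _

lemma hasDerivAt_ratio_update (δ : S → A → S) (s0 : S) {T : ℕ} (q : S × A → ℝ)
    (z₀ : S × A → ℝ) (s : S) (a : A) (y : Fin T → A) (t : Fin T) :
    HasDerivAt (fun u : ℝ => ratio δ s0 q (Function.update z₀ (s, a) u) y t)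
      (ratio δ s0 q z₀ y t * (if st δ s0 y t = s then (1:ℝ) else 0)
        * ((if y t = a then (1:ℝ) else 0) - pol z₀ s a))
      (z₀ (s, a)) := by
  have h := (hasDerivAt_pol_update s a (st δ s0 y t) (y t) z₀).div_const
    (q (st δ s0 y t, y t))
  unfold ratio
  refine h.congr_deriv ?_
  by_cases hst : st δ s0 y t = s <;> simp [hst] <;> ring

end Aux

/-- Gradient of the PPO-style clipped surrogate in the tabular softmax
parametrization: `ℒ` is differentiable at `z₀`, and
`∂ℒ/∂z(s,a) = ∑_y w(y) ∑_t m(y,t)·A(y,t)·ρ_t(z₀,y)·1{s_t(y)=s}·(1{a_t=a} − π_{z₀}(a|s))`. -/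
theorem stmt_14 {S A : Type*} [Fintype S] [Fintype A] [Nonempty A]
    [DecidableEq S] [DecidableEq A]
    (δ : S → A → S) (s0 : S) (T : ℕ) (hT : 1 ≤ T)
    (ε : ℝ) (hε : 0 < ε)
    (w : (Fin T → A) → ℝ) (hw : ∀ y, 0 ≤ w y)
    (Adv : (Fin T → A) → Fin T → ℝ)
    (q : S × A → ℝ) (hq : ∀ p, 0 < q p)
    (z₀ : S × A → ℝ)
    (hρ : ∀ y, w y ≠ 0 → ∀ t : Fin T,
      ratio δ s0 q z₀ y t ≠ 1 - ε ∧ ratio δ s0 q z₀ y t ≠ 1 + ε) :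
    DifferentiableAt ℝ (surrogate δ s0 ε w Adv q) z₀
    ∧ ∀ (s : S) (a : A),
      HasDerivAt
        (fun u : ℝ => surrogate δ s0 ε w Adv q (Function.update z₀ (s, a) u))
        (∑ y : Fin T → A, w y * ∑ t : Fin T,
          mask δ s0 ε Adv q z₀ y t * Adv y t * ratio δ s0 q z₀ y t
            * (if st δ s0 y t = s then (1 : ℝ) else 0)
            * ((if y t = a then (1 : ℝ) else 0) - pol z₀ s a))
        (z₀ (s, a)) := by
  classical
  have hdiffratio : ∀ (y : Fin T → A) (t : Fin T),
      DifferentiableAt ℝ (fun z : S × A → ℝ => ratio δ s0 q z y t) z₀ := by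
    intro y t
    unfold ratio
    simp only [div_eq_mul_inv]
    exact (diff_pol _ _ z₀).mul_const _
  -- the locally-equal smooth surrogate
  set G : (S × A → ℝ) → ℝ := fun z => ∑ y : Fin T → A, w y * ∑ t : Fin T,
      (mask δ s0 ε Adv q z₀ y t * (Adv y t * ratio δ s0 q z y t)
        + (1 - mask δ s0 ε Adv q z₀ y t) * (clip ε (ratio δ s0 q z₀ y t) * Adv y t))
    with hGdef
  have hterm : ∀ y, w y ≠ 0 → ∀ t : Fin T, ∀ᶠ z in nhds z₀,
      min (ratio δ s0 q z y t * Adv y t) (clip ε (ratio δ s0 q z y t) * Adv y t)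
        = mask δ s0 ε Adv q z₀ y t * (Adv y t * ratio δ s0 q z y t)
          + (1 - mask δ s0 ε Adv q z₀ y t) * (clip ε (ratio δ s0 q z₀ y t) * Adv y t) := by
    intro y hwy t
    have hcont : ContinuousAt (fun z : S × A → ℝ => ratio δ s0 q z y t) z₀ :=
      (hdiffratio y t).continuousAt
    unfold mask
    by_cases hcase : (0 ≤ Adv y t ∧ 1 + ε < ratio δ s0 q z₀ y t)
        ∨ (Adv y t ≤ 0 ∧ ratio δ s0 q z₀ y t < 1 - ε)
    · rw [if_pos hcase]
      rcases hcase with ⟨hA, hr⟩ | ⟨hA, hr⟩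
      · have hev : ∀ᶠ z in nhds z₀, 1 + ε < ratio δ s0 q z y t :=
          hcont.eventually (eventually_gt_nhds hr)
        filter_upwards [hev] with z hz
        have hclip : clip ε (ratio δ s0 q z y t) = 1 + ε := by
          unfold clip
          rw [max_eq_left (by linarith), min_eq_right (by linarith)]
        have hclip0 : clip ε (ratio δ s0 q z₀ y t) = 1 + ε := by
          unfold clip
          rw [max_eq_left (by linarith), min_eq_right (by linarith)]
        rw [hclip, hclip0, min_eq_right (mul_le_mul_of_nonneg_right hz.le hA)]
        ring
      · have hev : ∀ᶠ z in nhds z₀, ratio δ s0 q z y t < 1 - ε :=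
          hcont.eventually (eventually_lt_nhds hr)
        filter_upwards [hev] with z hz
        have hclip : clip ε (ratio δ s0 q z y t) = 1 - ε := by
          unfold clip
          rw [max_eq_right (by linarith), min_eq_left (by linarith)]
        have hclip0 : clip ε (ratio δ s0 q z₀ y t) = 1 - ε := by
          unfold clip
          rw [max_eq_right (by linarith), min_eq_left (by linarith)]
        rw [hclip, hclip0, min_eq_right (mul_le_mul_of_nonpos_right hz.le hA)]
        ring
    · rw [if_neg hcase]
      push_neg at hcase
      obtain ⟨h1, h2⟩ := hcase
      rcases lt_trichotomy (Adv y t) 0 with hA | hA | hA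
      · have hgt : 1 - ε < ratio δ s0 q z₀ y t :=
          lt_of_le_of_ne (h2 hA.le) (Ne.symm (hρ y hwy t).1)
        have hev : ∀ᶠ z in nhds z₀, 1 - ε < ratio δ s0 q z y t :=
          hcont.eventually (eventually_gt_nhds hgt)
        filter_upwards [hev] with z hz
        have hle : clip ε (ratio δ s0 q z y t) ≤ ratio δ s0 q z y t := by
          unfold clip
          rw [max_eq_left hz.le]
          exact min_le_left _ _
        rw [min_eq_left (mul_le_mul_of_nonpos_right hle hA.le)]
        ring
      · simp [hA]
      · have hlt : ratio δ s0 q z₀ y t < 1 + ε :=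
          lt_of_le_of_ne (h1 hA.le) (hρ y hwy t).2
        have hev : ∀ᶠ z in nhds z₀, ratio δ s0 q z y t < 1 + ε :=
          hcont.eventually (eventually_lt_nhds hlt)
        filter_upwards [hev] with z hz
        have hle : ratio δ s0 q z y t ≤ clip ε (ratio δ s0 q z y t) :=
          le_min (le_max_left _ _) hz.le
        rw [min_eq_left (mul_le_mul_of_nonneg_right hle hA.le)]
        ring
  have hev : surrogate δ s0 ε w Adv q =ᶠ[nhds z₀] G := by
    have hall : ∀ᶠ z in nhds z₀, ∀ (y : Fin T → A) (t : Fin T), w y ≠ 0 →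
        min (ratio δ s0 q z y t * Adv y t) (clip ε (ratio δ s0 q z y t) * Adv y t)
          = mask δ s0 ε Adv q z₀ y t * (Adv y t * ratio δ s0 q z y t)
            + (1 - mask δ s0 ε Adv q z₀ y t)
              * (clip ε (ratio δ s0 q z₀ y t) * Adv y t) := by
      rw [Filter.eventually_all]
      intro y
      rw [Filter.eventually_all]
      intro t
      by_cases hwy : w y = 0
      · filter_upwards with z hz; exact absurd hwy hz
      · filter_upwards [hterm y hwy t] with z hz _; exact hz
    filter_upwards [hall] with z hz
    unfold surrogate
    rw [hGdef]
    apply Finset.sum_congr rfl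
    intro y _
    by_cases hwy : w y = 0
    · rw [hwy, zero_mul, zero_mul]
    · congr 1
      exact Finset.sum_congr rfl fun t _ => hz y t hwy
  have hGdiff : DifferentiableAt ℝ G z₀ := by
    rw [hGdef]
    apply DifferentiableAt.fun_sum
    intro y _
    apply DifferentiableAt.const_mul
    apply DifferentiableAt.fun_sum
    intro t _
    exact (((hdiffratio y t).const_mul _).const_mul _).add_const _
  refine ⟨hev.differentiableAt_iff.mpr hGdiff, ?_⟩
  intro s a
  have hupd : Filter.Tendsto (fun u : ℝ => Function.update z₀ (s, a) u)
      (nhds (z₀ (s, a))) (nhds z₀) := by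
    have hc : Continuous (fun u : ℝ => Function.update z₀ (s, a) u) := by
      apply continuous_pi
      intro r
      simp only [Function.update_apply]
      by_cases hr : r = (s, a)
      · simp only [hr, if_pos rfl]
        exact continuous_id
      · simp only [if_neg hr]
        exact continuous_const
    have := hc.continuousAt (x := z₀ (s, a))
    rwa [ContinuousAt, Function.update_eq_self] at this
  have hevd : (fun u : ℝ => surrogate δ s0 ε w Adv q (Function.update z₀ (s, a) u))
      =ᶠ[nhds (z₀ (s, a))] (fun u : ℝ => G (Function.update z₀ (s, a) u)) :=
    hev.comp_tendsto hupd
  have hG' : HasDerivAt (fun u : ℝ => G (Function.update z₀ (s, a) u))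
      (∑ y : Fin T → A, w y * ∑ t : Fin T,
        mask δ s0 ε Adv q z₀ y t * Adv y t * ratio δ s0 q z₀ y t
          * (if st δ s0 y t = s then (1 : ℝ) else 0)
          * ((if y t = a then (1 : ℝ) else 0) - pol z₀ s a))
      (z₀ (s, a)) := by
    rw [hGdef]
    apply HasDerivAt.fun_sum
    intro y _
    apply HasDerivAt.const_mul
    apply HasDerivAt.fun_sum
    intro t _
    have h := (((hasDerivAt_ratio_update δ s0 q z₀ s a y t).const_mul
      (Adv y t)).const_mul (mask δ s0 ε Adv q z₀ y t)).add_const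
      ((1 - mask δ s0 ε Adv q z₀ y t) * (clip ε (ratio δ s0 q z₀ y t) * Adv y t))
    convert h using 1
    ring
  exact hevd.hasDerivAt_iff.mpr hG'
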